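/- Let G be a group containing an element g of infinite order whose centralizer C_G(g) has finite abelianization. Then G admits no faithful linear representation over any field of positive characteristic. -/

import Mathlib

open Module LinearMap

lemma aux_pow_eq_one {K : Type*} [Field K] [IsAlgClosed K] (p : ℕ) [Fact p.Prime] [CharP K p]
    {V : Type*} [AddCommGroup V] [Module K V] [FiniteDimensional K V]
    {C : Type*} [Group C] [Finite (Abelianization C)]
    (τ : C →* (Module.End K V)ˣ) (c0 : C) (hc0 : ∀ c : C, c0 * c = c * c0) :
    ∃ M : ℕ, 0 < M ∧ τ c0 ^ M = 1 := by
  set u : Module.End K V := ((τ c0 : (Module.End K V)ˣ) : Module.End K V) with hu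
  set n : ℕ := finrank K V with hn
  set n0 : ℕ := Nat.card (Abelianization C) with hn0
  have hn0pos : 0 < n0 := Nat.card_pos
  have hp1 : 1 < p := (Fact.out : p.Prime).one_lt
  have hppos : 0 < p := lt_trans one_pos hp1
  set q : ℕ := p ^ n with hq
  have hqpos : 0 < q := pow_pos hppos n
  have hne : n ≤ q := le_of_lt (Nat.lt_pow_self (n := n) hp1)
  set M : ℕ := q * (q * (n0 * n.factorial)) with hM
  have hMpos : 0 < M :=
    Nat.mul_pos hqpos (Nat.mul_pos hqpos (Nat.mul_pos hn0pos n.factorial_pos))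
  refine ⟨M, hMpos, ?_⟩
  have key : ∀ (μ : K), ∀ x ∈ u.maxGenEigenspace μ, (u ^ M) x = x := by
    intro μ x hx
    by_cases hbot : u.maxGenEigenspace μ = ⊥
    · rw [hbot, Submodule.mem_bot] at hx
      simp [hx]
    set W : Submodule K V := u.maxGenEigenspace μ with hWdef
    haveI : Nontrivial W := Submodule.nontrivial_iff_ne_bot.mpr hbot
    have hcomm : ∀ c : C, Commute u ((τ c : (Module.End K V)ˣ) : Module.End K V) := by
      intro c
      have h1 : τ c0 * τ c = τ c * τ c0 := by rw [← map_mul, ← map_mul, hc0]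
      exact congrArg Units.val h1
    have hW : ∀ c : C, ∀ y ∈ W, ((τ c : (Module.End K V)ˣ) : Module.End K V) y ∈ W :=
      fun c => Module.End.mapsTo_maxGenEigenspace_of_comm (hcomm c) μ
    let restr : C →* Module.End K W :=
      { toFun := fun c => ((τ c : (Module.End K V)ˣ) : Module.End K V).restrict (hW c)
        map_one' := by
          ext y
          simp [LinearMap.restrict_apply]
        map_mul' := by
          intro a b
          ext y
          simp [LinearMap.restrict_apply, Units.val_mul, Module.End.mul_apply] }
    let φ : C →* Kˣ := (Units.map (LinearMap.det : Module.End K W →* K)).comp restr.toHomUnits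
    have hφ : ((φ c0 : Kˣ) : K) ^ n0 = 1 := by
      have h2 : φ c0 = (Abelianization.lift φ) (Abelianization.of c0) := rfl
      have h3 : (φ c0) ^ n0 = 1 := by
        rw [h2, ← map_pow, hn0, pow_card_eq_one', map_one]
      calc ((φ c0 : Kˣ) : K) ^ n0 = (((φ c0) ^ n0 : Kˣ) : K) := by
            rw [Units.val_pow_eq_pow_val]
        _ = 1 := by rw [h3, Units.val_one]
    set r : Module.End K W := restr c0 with hr
    have hdet : LinearMap.det r = ((φ c0 : Kˣ) : K) := by
      simp [φ, MonoidHom.coe_toHomUnits]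
      rfl
    have hmaps_sub : ∀ y ∈ W, (u - μ • 1) y ∈ W :=
      Module.End.mapsTo_maxGenEigenspace_of_comm (Commute.sub_right (Commute.refl u)
        ((Commute.one_right u).smul_right μ)) μ
    have hsub : r - μ • 1 = (u - μ • 1).restrict hmaps_sub := by
      have h5 := LinearMap.restrict_sub (f := u) (g := (μ • 1 : Module.End K V))
        (p := W) (q := W) (hW c0) (fun y hy => W.smul_mem μ (by simpa using hy))
      rw [← h5]
      congr 1
    have hnil : (r - μ • 1) ^ q = 0 := by
      rw [hsub, Module.End.pow_restrict]
      ext y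
      have hy : ((u - μ • 1) ^ q) (y : V) = 0 := by
        have hy2 : (y : V) ∈ u.genEigenspace μ (finrank K V) := by
          rw [← u.maxGenEigenspace_eq_genEigenspace_finrank]
          exact y.2
        rw [Module.End.mem_genEigenspace_nat, LinearMap.mem_ker] at hy2
        have h6 : ((u - μ • 1) ^ q) (y : V)
            = ((u - μ • 1) ^ (q - n)) (((u - μ • 1) ^ n) (y : V)) := by
          rw [← Module.End.mul_apply, ← pow_add, Nat.sub_add_cancel hne]
        rw [h6, hy2, map_zero]
      simp only [LinearMap.zero_apply]
      rw [LinearMap.restrict_coe_apply]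
      simpa using hy
    haveI : CharP (Module.End K W) p := charP_of_injective_algebraMap' (A := Module.End K W) K p
    have hrq : r ^ q = (μ ^ q) • (1 : Module.End K W) := by
      have hcom : Commute (r - μ • 1) (μ • (1 : Module.End K W)) :=
        ((Commute.one_right _).smul_right μ).sub_left ((Commute.one_right _).smul_right μ)
      calc r ^ q = ((r - μ • 1) + μ • 1) ^ q := by rw [sub_add_cancel]
        _ = (r - μ • 1) ^ q + (μ • 1) ^ q := add_pow_char_pow_of_commute p n hcom
        _ = (μ • 1) ^ q := by rw [hnil, zero_add]
        _ = μ ^ q • 1 := by rw [smul_pow, one_pow]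
    set w : ℕ := finrank K W with hwdef
    have hwpos : 0 < w := finrank_pos
    have hwle : w ≤ n := Submodule.finrank_le W
    have hdetq : (LinearMap.det r) ^ q = μ ^ (q * w) := by
      rw [← map_pow, hrq, LinearMap.det_smul, map_one, mul_one, ← pow_mul]
    have hμ1 : μ ^ (q * w * n0) = 1 := by
      calc μ ^ (q * w * n0) = ((LinearMap.det r) ^ q) ^ n0 := by rw [hdetq, ← pow_mul]
        _ = ((LinearMap.det r) ^ n0) ^ q := by rw [← pow_mul, ← pow_mul, Nat.mul_comm]
        _ = 1 := by rw [hdet, hφ, one_pow]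
    have hμ2 : μ ^ (q * n0 * n.factorial) = 1 := by
      obtain ⟨t, ht⟩ := Nat.dvd_factorial hwpos hwle
      have harith : q * n0 * n.factorial = (q * w * n0) * t := by rw [ht]; ring
      rw [harith, pow_mul, hμ1, one_pow]
    have hfinal : r ^ M = 1 := by
      have h7 : r ^ M = (r ^ q) ^ (q * (n0 * n.factorial)) := by rw [← pow_mul, hM]
      rw [h7, hrq, smul_pow, one_pow, ← pow_mul]
      have h8 : μ ^ (q * (q * (n0 * n.factorial))) = 1 := by
        have harith : q * (q * (n0 * n.factorial)) = (q * n0 * n.factorial) * q := by ring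
        rw [harith, pow_mul, hμ2, one_pow]
      rw [h8, one_smul]
    have h9 : restr (c0 ^ M) = 1 := by rw [map_pow, ← hr, hfinal]
    have h10 : ((restr (c0 ^ M)) ⟨x, hx⟩ : V) = (u ^ M) x := by
      show (((τ (c0 ^ M) : (Module.End K V)ˣ) : Module.End K V).restrict (hW _) ⟨x, hx⟩ : V) = _
      rw [LinearMap.restrict_coe_apply, map_pow, Units.val_pow_eq_pow_val]
    rw [h9] at h10
    simpa using h10.symm
  have htop : u ^ M = 1 := by
    ext x
    have hxtop : x ∈ ⨆ μ : K, u.maxGenEigenspace μ := by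
      rw [Module.End.iSup_maxGenEigenspace_eq_top]; trivial
    have hx : (u ^ M) x = x := by
      refine Submodule.iSup_induction (motive := fun y => (u ^ M) y = y) _ hxtop
        (fun μ y hy => key μ y hy) (map_zero _) ?_
      intro a b ha hb
      rw [map_add, ha, hb]
    simpa using hx
  exact Units.ext (by simpa [Units.val_pow_eq_pow_val] using htop)

theorem stmt_10 (G : Type*) [Group G] (g : G) (hg : ¬ IsOfFinOrder g)
    (hfin : Finite (Abelianization (Subgroup.centralizer ({g} : Set G)))) :
    ∀ (d : ℕ) (F : Type*) [Field F] (p : ℕ), 0 < p → CharP F p →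
      ∀ ρ : G →* GL (Fin d) F, ¬ Function.Injective ρ := by
  intro d F _ p hp hcharp ρ hinj
  haveI : NeZero p := ⟨hp.ne'⟩
  haveI : Fact p.Prime := CharP.char_is_prime_of_pos F p
  set K := AlgebraicClosure F with hK
  haveI : CharP K p := inferInstance
  let e1 : Matrix (Fin d) (Fin d) F →+* Matrix (Fin d) (Fin d) K := (algebraMap F K).mapMatrix
  have he1 : Function.Injective e1 :=
    Matrix.map_injective (RingHom.injective (algebraMap F K))
  let e2 : Matrix (Fin d) (Fin d) K ≃* Module.End K (Fin d → K) :=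
    Matrix.toLinAlgEquiv'.toRingEquiv.toMulEquiv
  let ψ : G →* (Module.End K (Fin d → K))ˣ :=
    ((Units.mapEquiv e2).toMonoidHom.comp (Units.map e1.toMonoidHom)).comp ρ
  have hψ : Function.Injective ψ :=
    ((Units.mapEquiv e2).injective.comp (Units.map_injective he1)).comp hinj
  set C := Subgroup.centralizer ({g} : Set G) with hC
  haveI : Finite (Abelianization C) := hfin
  have hgC : g ∈ C := Subgroup.mem_centralizer_iff.mpr (by
    intro h hh
    rw [Set.mem_singleton_iff] at hh
    rw [hh])
  let c0 : C := ⟨g, hgC⟩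
  have hc0 : ∀ c : C, c0 * c = c * c0 := by
    intro c
    have hc := Subgroup.mem_centralizer_iff.mp c.2
    exact Subtype.ext (hc g rfl)
  let τ : C →* (Module.End K (Fin d → K))ˣ := ψ.comp C.subtype
  obtain ⟨M, hMpos, hM1⟩ := aux_pow_eq_one p τ c0 hc0
  have hgM : g ^ M = 1 := by
    apply hψ
    rw [map_one, map_pow]
    have h11 : ψ g = τ c0 := rfl
    rw [h11, hM1]
  exact hg (isOfFinOrder_iff_pow_eq_one.mpr ⟨M, hMpos, hgM⟩)
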